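/- arXiv:1805.05196 — 2 statements merged into one kernel-verified Lean document; each statement's English description precedes it below -/
import Mathlib

section
/- For all n ≥ 3, the number of cyclic permutations of length n avoiding both patterns 123 and 132 equals 2^{floor((n-1)/2)}. -/
/-- A permutation of {1,...,n} is cyclic (a single n-cycle) iff it acts transitively. -/
def IsCyclicPerm {n : ℕ} (p : Equiv.Perm (Fin n)) : Prop :=
  ∀ x y : Fin n, ∃ m : ℕ, (p ^ m) x = y

/-- `p` contains the pattern `q` (given as a word `q 0, q 1, ...`). -/
def Contains {n k : ℕ} (p : Equiv.Perm (Fin n)) (q : Fin k → Fin k) : Prop :=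
  ∃ f : Fin k → Fin n, StrictMono f ∧ ∀ i j : Fin k, q i < q j ↔ p (f i) < p (f j)

def Avoids {n k : ℕ} (p : Equiv.Perm (Fin n)) (q : Fin k → Fin k) : Prop :=
  ¬ Contains p q

def pat123 : Fin 3 → Fin 3 := ![0, 1, 2]
def pat231 : Fin 3 → Fin 3 := ![1, 2, 0]
def pat132 : Fin 3 → Fin 3 := ![0, 2, 1]
def pat321 : Fin 3 → Fin 3 := ![2, 1, 0]
def pat312 : Fin 3 → Fin 3 := ![2, 0, 1]

/-- `p` is the three-layer permutation of the triple `(a,b,c)`, in 0-based form: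
`p_i = n+1-i` for `1 ≤ i ≤ a`, `p_i = a+b+1-i` for `a+1 ≤ i ≤ a+b`,
`p_i = n+b+1-i` for `a+b+1 ≤ i ≤ n` (1-based). -/
def IsTriplePerm (n a b : ℕ) (p : Equiv.Perm (Fin n)) : Prop :=
  ∀ i : Fin n, (p i : ℕ) =
    if (i : ℕ) < a then n - 1 - (i : ℕ)
    else if (i : ℕ) < a + b then a + b - 1 - (i : ℕ)
    else n + b - 1 - (i : ℕ)

namespace S16

def runStart (c : ℕ → Bool) : ℕ → ℕ
  | 0 => 0
  | i+1 => if c i then runStart c i else i + 1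

lemma runStart_le (c : ℕ → Bool) : ∀ i, runStart c i ≤ i
  | 0 => le_refl 0
  | i+1 => by
      unfold runStart
      split
      · exact (runStart_le c i).trans (Nat.le_succ i)
      · exact le_refl _

lemma runStart_run (c : ℕ → Bool) : ∀ j i, runStart c j ≤ i → i < j → c i = true
  | 0, i, _, h => absurd h (Nat.not_lt_zero i)
  | j+1, i, hle, hlt => by
      unfold runStart at hle
      by_cases hcj : c j
      · rcases Nat.lt_succ_iff_lt_or_eq.mp hlt with h | h
        · rw [if_pos hcj] at hle
          exact runStart_run c j i hle h
        · subst h; exact hcj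
      · rw [if_neg hcj] at hle
        exact absurd hlt (by omega)

lemma runStart_pred (c : ℕ → Bool) : ∀ j, 1 ≤ runStart c j → c (runStart c j - 1) = false
  | 0 => by simp [runStart]
  | j+1 => by
      unfold runStart
      by_cases hcj : c j
      · rw [if_pos hcj]
        exact runStart_pred c j
      · rw [if_neg hcj]
        intro _
        simpa using hcj

lemma runStart_zero (c : ℕ → Bool) : ∀ i, (∀ t, t < i → c t = true) → runStart c i = 0
  | 0, _ => rfl
  | i+1, h => by
      unfold runStart
      rw [if_pos (h i (Nat.lt_succ_self i))]
      exact runStart_zero c i (fun t ht => h t (ht.trans (Nat.lt_succ_self i)))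

/-- The value of the avoider at position `i`. -/
def pv (n : ℕ) (c : ℕ → Bool) (i : ℕ) : ℕ :=
  if c i then n - 2 - i else n - 1 - runStart c i

lemma pv_lt (n : ℕ) (c : ℕ → Bool) (i : ℕ) (hn : 1 ≤ n) : pv n c i < n := by
  unfold pv
  have := runStart_le c i
  split <;> omega

lemma c_lt (n : ℕ) (c : ℕ → Bool) (Hc : ∀ i, n - 1 ≤ i → c i = false)
    (i : ℕ) (h : c i = true) : i < n - 1 := by
  by_contra hh
  rw [Hc i (by omega)] at h
  exact absurd h (by simp)

lemma pv_inj (n : ℕ) (c : ℕ → Bool) (Hc : ∀ i, n - 1 ≤ i → c i = false)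
    {i j : ℕ} (hi : i < n) (hj : j < n) (h : pv n c i = pv n c j) : i = j := by
  by_contra hne
  wlog hij : i < j generalizing i j
  · exact this hj hi h.symm (Ne.symm hne) (by omega)
  unfold pv at h
  have hrsi := runStart_le c i
  have hrsj := runStart_le c j
  by_cases hci : c i <;> by_cases hcj : c j
  · have h1 := c_lt n c Hc i hci
    have h2 := c_lt n c Hc j hcj
    rw [if_pos hci, if_pos hcj] at h
    omega
  · rw [if_pos hci, if_neg hcj] at h
    have h1 := c_lt n c Hc i hci
    have hrs : runStart c j = i + 1 := by omega
    have := runStart_pred c j (by omega)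
    rw [hrs] at this
    simp only [Nat.add_sub_cancel] at this
    rw [this] at hci
    exact absurd hci (by simp)
  · rw [if_neg hci, if_pos hcj] at h
    have h2 := c_lt n c Hc j hcj
    omega
  · rw [if_neg hci, if_neg hcj] at h
    have h3 : runStart c j ≤ i := by omega
    have := runStart_run c j i h3 hij
    rw [this] at hci
    exact hci rfl

/-- The avoider permutation built from the choice string `c`. -/
noncomputable def permC (n : ℕ) (c : ℕ → Bool) (Hc : ∀ i, n - 1 ≤ i → c i = false) :
    Equiv.Perm (Fin n) :=
  Equiv.ofBijective (fun i => ⟨pv n c i.val, pv_lt n c i.val i.pos⟩)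
    (Finite.injective_iff_bijective.mp (by
      intro i j hij
      have h2 : pv n c i.val = pv n c j.val := congrArg Fin.val hij
      exact Fin.ext (pv_inj n c Hc i.isLt j.isLt h2)))

lemma permC_apply (n : ℕ) (c : ℕ → Bool) (Hc : ∀ i, n - 1 ≤ i → c i = false) (i : Fin n) :
    ((permC n c Hc) i : ℕ) = pv n c i.val := rfl



lemma pv_of_true {n : ℕ} {c : ℕ → Bool} {i : ℕ} (h : c i = true) : pv n c i = n - 2 - i := by
  unfold pv; rw [if_pos h]

lemma pv_of_false {n : ℕ} {c : ℕ → Bool} {i : ℕ} (h : c i = false) :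
    pv n c i = n - 1 - runStart c i := by
  unfold pv; rw [if_neg (by simp [h])]

lemma pv_lb (n : ℕ) (c : ℕ → Bool) (i : ℕ) : n - 2 - i ≤ pv n c i := by
  unfold pv
  have := runStart_le c i
  split <;> omega

/-- No element has two larger elements to its right. -/
def NoDouble {n : ℕ} (p : Equiv.Perm (Fin n)) : Prop :=
  ∀ i j k : Fin n, i < j → j < k → p i < p j → p i < p k → False

lemma noDouble_permC (n : ℕ) (c : ℕ → Bool) (Hc : ∀ i, n - 1 ≤ i → c i = false) :
    NoDouble (permC n c Hc) := by
  intro i j k hij hjk h1 h2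
  rw [Fin.lt_def] at hij hjk h1 h2
  rw [permC_apply, permC_apply] at h1
  rw [permC_apply, permC_apply] at h2
  have hlbi := pv_lb n c i.val
  -- j must be end-type with runStart ≤ i
  have hj' : c j.val = false ∧ runStart c j.val ≤ i.val := by
    by_cases hcj : c j.val
    · have := c_lt n c Hc j.val hcj
      rw [pv_of_true hcj] at h1
      omega
    · have hcj' : c j.val = false := by simpa using hcj
      rw [pv_of_false hcj'] at h1
      have := runStart_le c j.val
      exact ⟨hcj', by omega⟩
  have hk' : runStart c k.val ≤ i.val := by
    by_cases hck : c k.val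
    · have := c_lt n c Hc k.val hck
      rw [pv_of_true hck] at h2
      omega
    · have hck' : c k.val = false := by simpa using hck
      rw [pv_of_false hck'] at h2
      have := runStart_le c k.val
      omega
  have : c j.val = true := runStart_run c k.val j.val (by omega) hjk
  rw [hj'.1] at this
  exact absurd this (by simp)

/-- pigeonhole: under NoDouble every value is at least n-2-i. -/
lemma noDouble_lb {n : ℕ} (p : Equiv.Perm (Fin n)) (hp : NoDouble p) (i : Fin n) :
    n ≤ (p i : ℕ) + i.val + 2 := by
  by_contra hcon
  push_neg at hcon
  set S : Finset (Fin n) := Finset.univ.filter (fun j => p i < p j) with hS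
  have hcardS : S.card = n - 1 - (p i : ℕ) := by
    have himg : S = (Finset.Ioi (p i)).image p.symm := by
      ext j
      simp only [hS, Finset.mem_filter, Finset.mem_univ, true_and, Finset.mem_image,
        Finset.mem_Ioi]
      constructor
      · intro h
        exact ⟨p j, h, by simp⟩
      · rintro ⟨v, hv, rfl⟩
        simpa using hv
    rw [himg, Finset.card_image_of_injective _ p.symm.injective, Fin.card_Ioi]
  set T : Finset (Fin n) := S.filter (fun j => i < j) with hT
  have hsub : S ⊆ T ∪ Finset.Iio i := by
    intro j hj
    rcases lt_trichotomy i j with h | h | h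
    · exact Finset.mem_union_left _ (Finset.mem_filter.mpr ⟨hj, h⟩)
    · subst h
      rw [hS, Finset.mem_filter] at hj
      exact absurd hj.2 (lt_irrefl _)
    · exact Finset.mem_union_right _ (Finset.mem_Iio.mpr h)
  have hcard1 := Finset.card_le_card hsub
  have hcard2 := Finset.card_union_le T (Finset.Iio i)
  have hcard3 : (Finset.Iio i).card = i.val := by simp
  obtain ⟨a, ha, b, hb, hab⟩ := Finset.one_lt_card.mp (show 1 < T.card by omega)
  rw [hT] at ha hb
  simp only [hS, Finset.mem_filter, Finset.mem_univ, true_and] at ha hb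
  rcases lt_or_gt_of_ne hab with h | h
  · exact hp i a b ha.2 h ha.1 hb.1
  · exact hp i b a hb.2 h hb.1 ha.1

/-- the choice string of a permutation -/
def cOf {n : ℕ} (p : Equiv.Perm (Fin n)) : ℕ → Bool :=
  fun i => if h : i + 1 < n then decide ((p ⟨i, by omega⟩ : ℕ) + i + 2 = n) else false

lemma cOf_Hc {n : ℕ} (p : Equiv.Perm (Fin n)) : ∀ i, n - 1 ≤ i → cOf p i = false := by
  intro i hi
  unfold cOf
  rw [dif_neg (by omega)]



lemma runStart_succ (c : ℕ → Bool) (i : ℕ) :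
    runStart c (i+1) = if c i then runStart c i else i + 1 := rfl

/-- structure theorem: every NoDouble permutation is given by `pv` of its choice string -/
lemma noDouble_struct {n : ℕ} (p : Equiv.Perm (Fin n)) (hp : NoDouble p) (i0 : Fin n) :
    (p i0 : ℕ) = pv n (cOf p) i0.val := by
  have hn : 1 ≤ n := i0.pos
  set c := cOf p with hc
  have hstep : ∀ i : ℕ, ∀ hi : i < n,
      (∀ v : Fin n, ((n - 1 - i ≤ (v : ℕ) ∧ (v : ℕ) ≠ n - 1 - runStart c i) ↔
        ∃ t : Fin n, (t : ℕ) < i ∧ p t = v)) →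
      (p ⟨i, hi⟩ : ℕ) = pv n c i := by
    intro i hi hInv
    have hlb : n ≤ (p ⟨i, hi⟩ : ℕ) + i + 2 := noDouble_lb p hp ⟨i, hi⟩
    have hub : (p ⟨i, hi⟩ : ℕ) < n := (p ⟨i, hi⟩).isLt
    have hrs := runStart_le c i
    have hnotmem : ¬ ∃ t : Fin n, (t : ℕ) < i ∧ p t = p ⟨i, hi⟩ := by
      rintro ⟨t, ht, hteq⟩
      have h2 := congrArg Fin.val (p.injective hteq)
      simp only at h2
      omega
    have hmain : ¬ (n - 1 - i ≤ ((p ⟨i, hi⟩ : Fin n) : ℕ) ∧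
        ((p ⟨i, hi⟩ : Fin n) : ℕ) ≠ n - 1 - runStart c i) := fun h => hnotmem ((hInv _).mp h)
    by_cases hcase : ((p ⟨i, hi⟩ : Fin n) : ℕ) = n - 1 - runStart c i
    · have hcfalse : c i = false := by
        rw [hc]
        unfold cOf
        split
        · rw [decide_eq_false_iff_not]
          omega
        · rfl
      rw [pv_of_false hcfalse, hcase]
    · have h3 : ((p ⟨i, hi⟩ : Fin n) : ℕ) < n - 1 - i := by
        by_contra h4
        exact hmain ⟨by omega, hcase⟩
      have hi1 : i + 1 < n := by omega
      have hval : ((p ⟨i, hi⟩ : Fin n) : ℕ) = n - 2 - i := by omega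
      have hctrue : c i = true := by
        rw [hc]
        unfold cOf
        rw [dif_pos hi1, decide_eq_true_iff]
        omega
      rw [pv_of_true hctrue, hval]
  have hInvAll : ∀ i : ℕ, i ≤ n - 1 →
      (∀ v : Fin n, ((n - 1 - i ≤ (v : ℕ) ∧ (v : ℕ) ≠ n - 1 - runStart c i) ↔
        ∃ t : Fin n, (t : ℕ) < i ∧ p t = v)) := by
    intro i
    induction i with
    | zero =>
      intro _ v
      constructor
      · rintro ⟨h1, h2⟩
        have := v.isLt
        simp only [runStart] at h2
        omega
      · rintro ⟨t, ht, _⟩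
        omega
    | succ i IH =>
      intro hi1 v
      have hIi := IH (by omega)
      have hfi : (p ⟨i, by omega⟩ : ℕ) = pv n c i := hstep i (by omega) hIi
      have hrs := runStart_le c i
      by_cases hci : c i
      · have hrseq : runStart c (i+1) = runStart c i := by rw [runStart_succ, if_pos hci]
        have hval : (p ⟨i, by omega⟩ : ℕ) = n - 2 - i := by rw [hfi, pv_of_true hci]
        have hlt : i < n - 1 := c_lt n c (cOf_Hc p) i hci
        constructor
        · rintro ⟨h1, h2⟩
          rw [hrseq] at h2
          by_cases hv : n - 1 - i ≤ (v : ℕ)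
          · obtain ⟨t, ht, hteq⟩ := (hIi v).mp ⟨hv, h2⟩
            exact ⟨t, by omega, hteq⟩
          · refine ⟨⟨i, by omega⟩, by simp, ?_⟩
            apply Fin.ext
            omega
        · rintro ⟨t, ht, hteq⟩
          rcases Nat.lt_succ_iff_lt_or_eq.mp ht with h | h
          · obtain ⟨h1, h2⟩ := (hIi v).mpr ⟨t, h, hteq⟩
            rw [hrseq]
            exact ⟨by omega, h2⟩
          · have hteq2 : t = ⟨i, by omega⟩ := Fin.ext h
            rw [hteq2] at hteq
            have hveq : (v : ℕ) = n - 2 - i := by rw [← hteq]; exact hval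
            rw [hrseq]
            omega
      · have hci' : c i = false := by simpa using hci
        have hrseq : runStart c (i+1) = i + 1 := by rw [runStart_succ, if_neg (by simp [hci'])]
        have hval : (p ⟨i, by omega⟩ : ℕ) = n - 1 - runStart c i := by
          rw [hfi, pv_of_false hci']
        rw [hrseq]
        constructor
        · rintro ⟨h1, h2⟩
          by_cases hv : (v : ℕ) = n - 1 - runStart c i
          · exact ⟨⟨i, by omega⟩, by simp, Fin.ext (by omega)⟩
          · obtain ⟨t, ht, hteq⟩ := (hIi v).mp ⟨by omega, hv⟩
            exact ⟨t, by omega, hteq⟩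
        · rintro ⟨t, ht, hteq⟩
          rcases Nat.lt_succ_iff_lt_or_eq.mp ht with h | h
          · obtain ⟨h1, h2⟩ := (hIi v).mpr ⟨t, h, hteq⟩
            omega
          · have hteq2 : t = ⟨i, by omega⟩ := Fin.ext h
            rw [hteq2] at hteq
            have hveq : (v : ℕ) = n - 1 - runStart c i := by rw [← hteq]; exact hval
            omega
  exact hstep i0.val i0.isLt (hInvAll i0.val (by omega))




lemma pow_apply_add {β : Type*} (p : Equiv.Perm β) (a b : ℕ) (x : β) :
    (p ^ (a + b)) x = (p ^ a) ((p ^ b) x) := by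
  rw [pow_add, Equiv.Perm.mul_apply]

lemma pow_apply_succ' {β : Type*} (p : Equiv.Perm β) (m : ℕ) (x : β) :
    (p ^ (m + 1)) x = (p ^ m) (p x) := by
  rw [pow_succ, Equiv.Perm.mul_apply]

lemma pow_apply_succ {β : Type*} (p : Equiv.Perm β) (m : ℕ) (x : β) :
    (p ^ (m + 1)) x = p ((p ^ m) x) := by
  rw [pow_succ', Equiv.Perm.mul_apply]

lemma splice {n m2 : ℕ} (p : Equiv.Perm (Fin n)) (p' : Equiv.Perm (Fin m2))
    (s : Fin m2 → Fin n) (hs : Function.Injective s)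
    (w : Fin m2) (α₁ α₂ : Fin n)
    (hα₁ : ∀ x, s x ≠ α₁) (hα₂ : ∀ x, s x ≠ α₂)
    (htri : ∀ a : Fin n, a = α₁ ∨ a = α₂ ∨ ∃ x, s x = a)
    (h1 : ∀ x, x ≠ w → p (s x) = s (p' x))
    (h2 : p (s w) = α₁) (h3 : p α₁ = α₂) (h4 : p α₂ = s (p' w)) :
    IsCyclicPerm p ↔ IsCyclicPerm p' := by
  have hw3 : (p ^ 3) (s w) = s (p' w) := by
    show (p ^ (2 + 1)) (s w) = s (p' w)
    rw [pow_apply_succ', h2, pow_apply_succ', h3, pow_one, h4]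
  have hw2 : (p ^ 2) (s w) = α₂ := by
    show (p ^ (1 + 1)) (s w) = α₂
    rw [pow_apply_succ', h2, pow_one, h3]
  constructor
  · intro hcyc
    have claim : ∀ m : ℕ, ∀ x y, (p ^ m) (s x) = s y → ∃ m', (p' ^ m') x = y := by
      intro m
      induction m using Nat.strong_induction_on with
      | _ m IH =>
        intro x y hm
        by_cases hxw : x = w
        · subst hxw
          rcases m with _ | _ | _ | m₀
          · exact ⟨0, by rw [pow_zero] at hm ⊢; simpa using hs hm⟩
          · rw [pow_one, h2] at hm
            exact absurd hm.symm (hα₁ y)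
          · rw [hw2] at hm
            exact absurd hm.symm (hα₂ y)
          · rw [show m₀ + 1 + 1 + 1 = m₀ + 3 from rfl, pow_apply_add, hw3] at hm
            obtain ⟨m'', h''⟩ := IH m₀ (by omega) (p' x) y hm
            exact ⟨m'' + 1, by rw [pow_apply_succ', h'']⟩
        · rcases m with _ | m₀
          · exact ⟨0, by rw [pow_zero] at hm ⊢; simpa using hs hm⟩
          · rw [pow_apply_succ', h1 x hxw] at hm
            obtain ⟨m'', h''⟩ := IH m₀ (by omega) (p' x) y hm
            exact ⟨m'' + 1, by rw [pow_apply_succ', h'']⟩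
    intro x y
    obtain ⟨m, hm⟩ := hcyc (s x) (s y)
    exact claim m x y hm
  · intro hcyc'
    have step : ∀ z, ∃ m, (p ^ m) (s z) = s (p' z) := by
      intro z
      by_cases hzw : z = w
      · subst hzw; exact ⟨3, hw3⟩
      · exact ⟨1, by rw [pow_one]; exact h1 z hzw⟩
    have chain : ∀ m' : ℕ, ∀ x, ∃ m, (p ^ m) (s x) = s ((p' ^ m') x) := by
      intro m'
      induction m' with
      | zero => exact fun x => ⟨0, by simp⟩
      | succ m' IH =>
        intro x
        obtain ⟨m, hm⟩ := IH x
        obtain ⟨m₂, hm₂⟩ := step ((p' ^ m') x)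
        refine ⟨m₂ + m, ?_⟩
        rw [pow_apply_add, hm, hm₂, pow_apply_succ]
    have reachS : ∀ x y, ∃ m, (p ^ m) (s x) = s y := by
      intro x y
      obtain ⟨m', hm'⟩ := hcyc' x y
      obtain ⟨m, hm⟩ := chain m' x
      exact ⟨m, by rw [hm, hm']⟩
    have fromS : ∀ (x : Fin m2) (b : Fin n), ∃ m, (p ^ m) (s x) = b := by
      intro x b
      rcases htri b with rfl | rfl | ⟨y, rfl⟩
      · obtain ⟨m, hm⟩ := reachS x w
        exact ⟨1 + m, by rw [pow_apply_add, hm, pow_one, h2]⟩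
      · obtain ⟨m, hm⟩ := reachS x w
        exact ⟨2 + m, by rw [pow_apply_add, hm, hw2]⟩
      · exact reachS x y
    intro a b
    rcases htri a with rfl | rfl | ⟨x, rfl⟩
    · obtain ⟨m, hm⟩ := fromS (p' w) b
      refine ⟨m + 2, ?_⟩
      have : (p ^ 2) a = s (p' w) := by
        show (p ^ (1+1)) a = s (p' w)
        rw [pow_apply_succ', h3, pow_one, h4]
      rw [pow_apply_add, this, hm]
    · obtain ⟨m, hm⟩ := fromS (p' w) b
      exact ⟨m + 1, by rw [pow_apply_add, pow_one, h4, hm]⟩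
    · exact fromS x b

lemma not_cyclic_pair {n : ℕ} (p : Equiv.Perm (Fin n)) (a b y : Fin n)
    (hab : p a = b) (hba : p b = a) (hya : y ≠ a) (hyb : y ≠ b) : ¬ IsCyclicPerm p := by
  intro h
  obtain ⟨m, hm⟩ := h a y
  have horb : ∀ m, (p ^ m) a = a ∨ (p ^ m) a = b := by
    intro m
    induction m with
    | zero => left; simp
    | succ m IH =>
      rw [pow_apply_succ]
      rcases IH with h' | h' <;> rw [h']
      · right; exact hab
      · left; exact hba
  rcases horb m with h' | h' <;> rw [hm] at h'
  · exact hya h'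
  · exact hyb h'



def Sym (n : ℕ) (c : ℕ → Bool) : Prop :=
  ∀ i, i < n - 1 → ((2*i = n - 2 → c i = false) ∧ (2*i ≠ n - 2 → c (n - 2 - i) = !c i))

lemma runStart_shift (n : ℕ) (c c' : ℕ → Bool)
    (h : ∀ t, t < n - 3 → c' t = c (t+1)) (e : ℕ)
    (hbase : runStart c (e+1) = runStart c' e + 1) :
    ∀ t, e ≤ t → t ≤ n - 3 → runStart c (t+1) = runStart c' t + 1 := by
  intro t het
  induction t, het using Nat.le_induction with
  | base => exact fun _ => hbase
  | succ t het IH =>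
    intro htn
    have e1 := runStart_succ c (t+1)
    have e2 := runStart_succ c' t
    rw [e1, e2, h t (by omega)]
    by_cases hct : c (t+1)
    · rw [if_pos hct, if_pos hct, IH (by omega)]
    · rw [if_neg hct, if_neg hct]

lemma sym_shift (N : ℕ) (hn : 3 ≤ N) (c c' : ℕ → Bool)
    (hcc' : ∀ i, c' i = if i < N - 3 then c (i+1) else false)
    (hb : c (N-2) = !c 0) : Sym N c ↔ Sym (N-2) c' := by
  constructor
  · intro hS i hi
    have hi' : i < N - 3 := by omega
    obtain ⟨hA, hB⟩ := hS (i+1) (by omega)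
    constructor
    · intro h2i
      rw [hcc' i, if_pos hi']
      exact hA (by omega)
    · intro hne
      rw [hcc' i, if_pos hi', hcc' (N-2-2-i), if_pos (show N - 2 - 2 - i < N - 3 by omega)]
      have h5 := hB (by omega)
      rw [show N - 2 - (i+1) = N-2-2-i+1 by omega] at h5
      exact h5
  · intro hS i hi
    by_cases h0 : i = 0
    · subst h0
      refine ⟨fun h => absurd h (by omega), fun _ => ?_⟩
      rw [Nat.sub_zero]
      exact hb
    · by_cases hlast : i = N - 2
      · subst hlast
        refine ⟨fun h => absurd h (by omega), fun _ => ?_⟩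
        rw [show N - 2 - (N-2) = 0 by omega, hb, Bool.not_not]
      · obtain ⟨hA, hB⟩ := hS (i-1) (by omega)
        rw [hcc' (i-1), if_pos (show i - 1 < N - 3 by omega),
          show i - 1 + 1 = i by omega] at hA hB
        refine ⟨fun h => hA (by omega), fun hne => ?_⟩
        have h5 := hB (by omega)
        rw [hcc' (N-2-2-(i-1)), if_pos (show N - 2 - 2 - (i-1) < N - 3 by omega),
          show N-2-2-(i-1)+1 = N-2-i by omega] at h5
        exact h5

lemma cyclic_iff_sym : ∀ n, 1 ≤ n → ∀ c, ∀ Hc : (∀ i, n - 1 ≤ i → c i = false),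
    (IsCyclicPerm (permC n c Hc) ↔ Sym n c) := by
  intro n
  induction n using Nat.strong_induction_on with
  | _ n IH =>
  intro hn c Hc
  match n, hn with
  | 1, _ =>
    apply iff_of_true
    · intro x y
      exact ⟨0, by rw [pow_zero]; exact Subsingleton.elim _ _⟩
    · intro i hi
      exact absurd hi (by omega)
  | 2, _ =>
    have hc1 : c 1 = false := Hc 1 (by omega)
    by_cases hc0 : c 0
    · apply iff_of_false
      · apply not_cyclic_pair _ ⟨0, by omega⟩ ⟨0, by omega⟩ ⟨1, by omega⟩
        · apply Fin.ext
          show pv 2 c 0 = 0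
          rw [pv_of_true hc0]
        · apply Fin.ext
          show pv 2 c 0 = 0
          rw [pv_of_true hc0]
        · intro h
          have h2 : (1 : ℕ) = 0 := congrArg Fin.val h
          omega
        · intro h
          have h2 : (1 : ℕ) = 0 := congrArg Fin.val h
          omega
      · intro hS
        have h5 := (hS 0 (by omega)).1 (by omega)
        rw [hc0] at h5
        exact absurd h5 (by simp)
    · have hc0' : c 0 = false := by simpa using hc0
      apply iff_of_true
      · have e0 : permC 2 c Hc ⟨0, by omega⟩ = ⟨1, by omega⟩ := by
          apply Fin.ext
          show pv 2 c 0 = 1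
          rw [pv_of_false hc0']
          rfl
        have e1 : permC 2 c Hc ⟨1, by omega⟩ = ⟨0, by omega⟩ := by
          apply Fin.ext
          show pv 2 c 1 = 0
          rw [pv_of_false hc1, runStart_succ, if_neg (by simp [hc0'])]
        intro x y
        by_cases hxy : x = y
        · exact ⟨0, by rw [pow_zero]; exact congrArg _ hxy⟩
        · refine ⟨1, ?_⟩
          rw [pow_one]
          have hx := x.isLt
          have hy := y.isLt
          have hne : x.val ≠ y.val := fun hh => hxy (Fin.ext hh)
          rcases (show x.val = 0 ∧ y.val = 1 ∨ x.val = 1 ∧ y.val = 0 by omega) with ⟨h1, h2⟩ | ⟨h1, h2⟩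
          · rw [show x = ⟨0, by omega⟩ from Fin.ext h1, e0]
            exact (Fin.ext h2).symm
          · rw [show x = ⟨1, by omega⟩ from Fin.ext h1, e1]
            exact (Fin.ext h2).symm
      · intro i hi
        have h0 : i = 0 := by omega
        subst h0
        exact ⟨fun _ => hc0', fun h => absurd (by norm_num) h⟩
  | (m+3), _ =>
    set N := m + 3 with hN
    have hN3 : 3 ≤ N := by omega
    by_cases hb : c (N-2) = !c 0
    · -- boundary pair is good: splice down to N-2
      set c' : ℕ → Bool := fun i => if i < N - 3 then c (i+1) else false with hc'
      have hcc' : ∀ i, c' i = if i < N - 3 then c (i+1) else false := fun i => rfl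
      have Hc' : ∀ i, (N-2) - 1 ≤ i → c' i = false := by
        intro i hi
        rw [hcc', if_neg (by omega)]
      have hIH := IH (N-2) (by omega) (by omega) c' Hc'
      have hsym := sym_shift N hN3 c c' hcc' hb
      have hα₁' : ∀ x : Fin (N-2), (⟨x.val + 1, by have := x.isLt; omega⟩ : Fin N) ≠ ⟨0, by omega⟩ := by
        intro x h
        have h2 : x.val + 1 = 0 := congrArg Fin.val h
        omega
      have hα₂' : ∀ x : Fin (N-2), (⟨x.val + 1, by have := x.isLt; omega⟩ : Fin N) ≠ ⟨N-1, by omega⟩ := by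
        intro x h
        have h2 : x.val + 1 = N - 1 := congrArg Fin.val h
        have := x.isLt
        omega
      have hsinj : Function.Injective (fun x : Fin (N-2) => (⟨x.val + 1, by have := x.isLt; omega⟩ : Fin N)) := by
        intro a b hab
        have h2 : a.val + 1 = b.val + 1 := congrArg Fin.val hab
        exact Fin.ext (by omega)
      have htri' : ∀ a : Fin N, a = ⟨0, by omega⟩ ∨ a = ⟨N-1, by omega⟩ ∨
          ∃ x : Fin (N-2), (⟨x.val + 1, by have := x.isLt; omega⟩ : Fin N) = a := by
        intro a
        have ha := a.isLt
        rcases (show a.val = 0 ∨ a.val = N - 1 ∨ (1 ≤ a.val ∧ a.val ≤ N - 2) by omega) with h | h | ⟨h1, h2⟩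
        · exact Or.inl (Fin.ext h)
        · exact Or.inr (Or.inl (Fin.ext h))
        · exact Or.inr (Or.inr ⟨⟨a.val - 1, by omega⟩, Fin.ext (by show a.val - 1 + 1 = a.val; omega)⟩)
      have hsplice : IsCyclicPerm (permC N c Hc) ↔ IsCyclicPerm (permC (N-2) c' Hc') := by
        by_cases hc0 : c 0
        · -- β = 1 : c 0 = true, c (N-2) = false
          have hbf : c (N-2) = false := by rw [hb, hc0]; rfl
          have hex : ∃ t, c t = false := ⟨N-2, hbf⟩
          set e := Nat.find hex with he_def
          have he : c e = false := Nat.find_spec hex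
          have hmin : ∀ t, t < e → c t = true := by
            intro t ht
            have := Nat.find_min hex ht
            simpa using this
          have he1 : 1 ≤ e := by
            rcases Nat.eq_zero_or_pos e with h | h
            · rw [h] at he; rw [he] at hc0; exact absurd hc0 (by simp)
            · exact h
          have heN : e ≤ N - 2 := Nat.find_min' hex hbf
          have hc'w : c' (e-1) = false := by
            rw [hcc']
            by_cases hlt : e - 1 < N - 3
            · rw [if_pos hlt, show e-1+1 = e by omega]
              exact he
            · rw [if_neg hlt]
          have hccs : ∀ t, t < N - 3 → c' t = c (t+1) := by
            intro t ht
            rw [hcc', if_pos ht]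
          have hbase : runStart c (e+1) = runStart c' e + 1 := by
            have hL : runStart c (e+1) = e+1 := by
              rw [runStart_succ, if_neg (by simp [he])]
            have hR : runStart c' e = e := by
              have h0 : runStart c' (e-1+1) = e-1+1 := by
                rw [runStart_succ, if_neg (by simp [hc'w])]
              rw [show e = e-1+1 by omega]
              exact h0
            rw [hL, hR]
          have hshift := runStart_shift N c c' hccs e hbase
          apply splice (permC N c Hc) (permC (N-2) c' Hc') _ hsinj
            ⟨e - 1, by omega⟩ ⟨N-1, by omega⟩ ⟨0, by omega⟩ hα₂' hα₁' ?_ ?_ ?_ ?_ ?_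
          · intro a
            rcases htri' a with h | h | h
            · exact Or.inr (Or.inl h)
            · exact Or.inl h
            · exact Or.inr (Or.inr h)
          · -- h1
            intro x hxw
            apply Fin.ext
            show pv N c (x.val+1) = pv (N-2) c' x.val + 1
            have hxlt := x.isLt
            have hxne : x.val ≠ e - 1 := fun hh => hxw (Fin.ext hh)
            rcases (show x.val + 1 < e ∨ e ≤ x.val by omega) with hcase | hcase
            · have hct : c (x.val+1) = true := hmin _ hcase
              have hc't : c' x.val = true := by
                rw [hccs x.val (by omega)]
                exact hct
              rw [pv_of_true hct, pv_of_true hc't]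
              omega
            · have hrs := hshift x.val hcase (by omega)
              by_cases hct : c (x.val+1)
              · have hx4 : x.val + 1 ≠ N - 2 := by
                  intro hh
                  rw [hh, hbf] at hct
                  exact absurd hct (by simp)
                have hc't : c' x.val = true := by
                  rw [hccs x.val (by omega)]
                  exact hct
                rw [pv_of_true hct, pv_of_true hc't]
                have := c_lt N c Hc (x.val+1) hct
                omega
              · have hct' : c (x.val+1) = false := by simpa using hct
                have hc't : c' x.val = false := by
                  rw [hcc']
                  by_cases hlt : x.val < N - 3
                  · rw [if_pos hlt]; exact hct'
                  · rw [if_neg hlt]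
                rw [pv_of_false hct', pv_of_false hc't, hrs]
                have := runStart_le c' x.val
                omega
          · -- h2
            apply Fin.ext
            show pv N c (e-1+1) = N-1
            rw [show e-1+1 = e by omega, pv_of_false he, runStart_zero c e hmin]
            omega
          · -- h3
            apply Fin.ext
            show pv N c (N-1) = 0
            have hcn1 : c (N-1) = false := Hc _ (by omega)
            rw [pv_of_false hcn1, show N-1 = (N-2)+1 by omega, runStart_succ,
              if_neg (by simp [hbf])]
            omega
          · -- h4
            apply Fin.ext
            show pv N c 0 = pv (N-2) c' (e-1) + 1
            have hrs'0 : runStart c' (e-1) = 0 := by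
              apply runStart_zero
              intro t ht
              rw [hccs t (by omega)]
              exact hmin (t+1) (by omega)
            rw [pv_of_true hc0, pv_of_false hc'w, hrs'0]
            omega
        · -- β = 0 : c 0 = false, c (N-2) = true
          have hc0' : c 0 = false := by simpa using hc0
          have hbt : c (N-2) = true := by rw [hb, hc0']; rfl
          have hccs : ∀ t, t < N - 3 → c' t = c (t+1) := by
            intro t ht
            rw [hcc', if_pos ht]
          have hbase : runStart c (0+1) = runStart c' 0 + 1 := by
            rw [runStart_succ, if_neg (by simp [hc0'])]
            rfl
          have hshift := runStart_shift N c c' hccs 0 hbase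
          apply splice (permC N c Hc) (permC (N-2) c' Hc') _ hsinj
            ⟨N-3, by omega⟩ ⟨0, by omega⟩ ⟨N-1, by omega⟩ hα₁' hα₂' htri' ?_ ?_ ?_ ?_
          · -- h1
            intro x hxw
            apply Fin.ext
            show pv N c (x.val+1) = pv (N-2) c' x.val + 1
            have hxlt := x.isLt
            have hxne : x.val ≠ N - 3 := fun hh => hxw (Fin.ext hh)
            have hc'x : c' x.val = c (x.val + 1) := hccs x.val (by omega)
            have hrs := hshift x.val (by omega) (by omega)
            by_cases hct : c (x.val+1)
            · rw [pv_of_true hct, pv_of_true (by rw [hc'x]; exact hct)]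
              omega
            · have hct' : c (x.val+1) = false := by simpa using hct
              rw [pv_of_false hct', pv_of_false (by rw [hc'x]; exact hct'), hrs]
              have := runStart_le c' x.val
              omega
          · -- h2
            apply Fin.ext
            show pv N c (N-3+1) = 0
            rw [show N-3+1 = N-2 by omega, pv_of_true hbt]
            omega
          · -- h3
            apply Fin.ext
            show pv N c 0 = N-1
            rw [pv_of_false hc0', show runStart c 0 = 0 from rfl]
            omega
          · -- h4
            apply Fin.ext
            show pv N c (N-1) = pv (N-2) c' (N-3) + 1
            have hcn1 : c (N-1) = false := Hc _ (by omega)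
            have hc'w : c' (N-3) = false := by rw [hcc', if_neg (by omega)]
            have hrsN : runStart c (N-1) = runStart c (N-2) := by
              rw [show N-1 = (N-2)+1 by omega, runStart_succ, if_pos hbt]
            have hrs2 := hshift (N-3) (by omega) (by omega)
            rw [show N-3+1 = N-2 by omega] at hrs2
            rw [pv_of_false hcn1, pv_of_false hc'w, hrsN, hrs2]
            have := runStart_le c' (N-3)
            omega
      exact hsplice.trans (hIH.trans hsym.symm)
    · -- boundary pair is bad: both sides false
      apply iff_of_false
      · have hbb : c (N-2) = c 0 := by
          rcases hcn2 : c (N-2) <;> rcases hcc0 : c 0 <;> simp_all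
        by_cases hc0 : c 0
        · apply not_cyclic_pair _ ⟨0, by omega⟩ ⟨N-2, by omega⟩ ⟨N-1, by omega⟩
          · apply Fin.ext
            show pv N c 0 = N-2
            rw [pv_of_true hc0]
            omega
          · apply Fin.ext
            show pv N c (N-2) = 0
            rw [pv_of_true (by rw [hbb]; exact hc0)]
            omega
          · intro h
            have h2 : N-1 = 0 := congrArg Fin.val h
            omega
          · intro h
            have h2 : N-1 = N-2 := congrArg Fin.val h
            omega
        · have hc0' : c 0 = false := by simpa using hc0
          apply not_cyclic_pair _ ⟨0, by omega⟩ ⟨N-1, by omega⟩ ⟨1, by omega⟩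
          · apply Fin.ext
            show pv N c 0 = N-1
            rw [pv_of_false hc0', show runStart c 0 = 0 from rfl]
            omega
          · apply Fin.ext
            show pv N c (N-1) = 0
            have hcn1 : c (N-1) = false := Hc _ (by omega)
            rw [pv_of_false hcn1, show N-1 = (N-2)+1 by omega, runStart_succ,
              if_neg (by simp [hbb, hc0'])]
            omega
          · intro h
            have h2 : (1:ℕ) = 0 := congrArg Fin.val h
            omega
          · intro h
            have h2 : (1:ℕ) = N-1 := congrArg Fin.val h
            omega
      · intro hS
        have h5 := (hS 0 (by omega)).2 (by omega)
        rw [Nat.sub_zero] at h5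
        exact hb h5

lemma vec3_mk0 {α : Type*} (x y z : α) (h : (0:ℕ) < 3) : ![x,y,z] ⟨0, h⟩ = x := rfl
lemma vec3_mk1 {α : Type*} (x y z : α) (h : (1:ℕ) < 3) : ![x,y,z] ⟨1, h⟩ = y := rfl
lemma vec3_mk2 {α : Type*} (x y z : α) (h : (2:ℕ) < 3) : ![x,y,z] ⟨2, h⟩ = z := rfl

lemma strictMono_triple {n : ℕ} (i j k : Fin n) (hij : i < j) (hjk : j < k) :
    StrictMono ![i, j, k] := by
  have hik := hij.trans hjk
  intro a b hab
  fin_cases a <;> fin_cases b <;> simp only [] <;>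
    first
      | exact absurd hab (by decide)
      | simpa [vec3_mk0, vec3_mk1, vec3_mk2] using hij
      | simpa [vec3_mk0, vec3_mk1, vec3_mk2] using hjk
      | simpa [vec3_mk0, vec3_mk1, vec3_mk2] using hik

lemma contains123 {n : ℕ} (p : Equiv.Perm (Fin n)) (i j k : Fin n) (hij : i < j) (hjk : j < k)
    (h1 : p i < p j) (h2 : p j < p k) : Contains p pat123 := by
  refine ⟨![i,j,k], strictMono_triple i j k hij hjk, ?_⟩
  have h3 := h1.trans h2
  intro a b
  fin_cases a <;> fin_cases b <;>
    simp only [vec3_mk0, vec3_mk1, vec3_mk2] <;>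
    first
      | exact iff_of_false (by decide) (lt_irrefl _)
      | exact iff_of_true (by decide) h1
      | exact iff_of_true (by decide) h2
      | exact iff_of_true (by decide) h3
      | exact iff_of_false (by decide) (asymm h1)
      | exact iff_of_false (by decide) (asymm h2)
      | exact iff_of_false (by decide) (asymm h3)

lemma contains132 {n : ℕ} (p : Equiv.Perm (Fin n)) (i j k : Fin n) (hij : i < j) (hjk : j < k)
    (h1 : p i < p k) (h2 : p k < p j) : Contains p pat132 := by
  refine ⟨![i,j,k], strictMono_triple i j k hij hjk, ?_⟩
  have h3 := h1.trans h2
  intro a b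
  fin_cases a <;> fin_cases b <;>
    simp only [vec3_mk0, vec3_mk1, vec3_mk2] <;>
    first
      | exact iff_of_false (by decide) (lt_irrefl _)
      | exact iff_of_true (by decide) h1
      | exact iff_of_true (by decide) h2
      | exact iff_of_true (by decide) h3
      | exact iff_of_false (by decide) (asymm h1)
      | exact iff_of_false (by decide) (asymm h2)
      | exact iff_of_false (by decide) (asymm h3)

lemma avoids_iff {n : ℕ} (p : Equiv.Perm (Fin n)) :
    (Avoids p pat123 ∧ Avoids p pat132) ↔ NoDouble p := by
  constructor
  · rintro ⟨h123, h132⟩ i j k hij hjk h1 h2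
    have hjk' : p j ≠ p k := fun hh => absurd (p.injective hh) (by
      intro hh2; rw [hh2] at hjk; exact lt_irrefl _ hjk)
    rcases lt_or_gt_of_ne hjk' with hlt | hgt
    · exact h123 (contains123 p i j k hij hjk h1 hlt)
    · exact h132 (contains132 p i j k hij hjk h2 hgt)
  · intro hnd
    constructor
    · rintro ⟨f, hf, hiff⟩
      have h01 := (hiff 0 1).mp (by decide)
      have h02 := (hiff 0 2).mp (by decide)
      exact hnd (f 0) (f 1) (f 2) (hf (by decide)) (hf (by decide)) h01 h02
    · rintro ⟨f, hf, hiff⟩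
      have h01 := (hiff 0 1).mp (by decide)
      have h02 := (hiff 0 2).mp (by decide)
      exact hnd (f 0) (f 1) (f 2) (hf (by decide)) (hf (by decide)) h01 h02

def cb (n : ℕ) (b : Fin ((n-1)/2) → Bool) : ℕ → Bool := fun i =>
  if h : i < (n-1)/2 then b ⟨i, h⟩
  else if h2 : i < n - 1 ∧ 2*i ≠ n - 2 ∧ n - 2 - i < (n-1)/2 then !(b ⟨n-2-i, h2.2.2⟩)
  else false

lemma cb_Hc (n : ℕ) (hn : 3 ≤ n) (b : Fin ((n-1)/2) → Bool) :
    ∀ i, n - 1 ≤ i → cb n b i = false := by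
  intro i hi
  unfold cb
  rw [dif_neg (by omega), dif_neg (by omega)]

lemma cb_sym (n : ℕ) (hn : 3 ≤ n) (b : Fin ((n-1)/2) → Bool) : Sym n (cb n b) := by
  intro i hi
  have hk2 : 2*((n-1)/2) = n - 1 ∨ 2*((n-1)/2) = n - 2 := by omega
  constructor
  · intro h2i
    unfold cb
    rw [dif_neg (by omega), dif_neg (by omega)]
  · intro hne
    by_cases hik : i < (n-1)/2
    · unfold cb
      rw [dif_pos hik, dif_neg (by omega),
        dif_pos (show n-2-i < n-1 ∧ 2*(n-2-i) ≠ n-2 ∧ n-2-(n-2-i) < (n-1)/2 by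
          refine ⟨by omega, by omega, by omega⟩)]
      have hidx : (⟨n-2-(n-2-i), by omega⟩ : Fin ((n-1)/2)) = ⟨i, hik⟩ := Fin.ext (show n-2-(n-2-i) = i by omega)
      rw [hidx]
    · have hp : n - 2 - i < (n-1)/2 := by omega
      unfold cb
      rw [dif_pos hp, dif_neg hik, dif_pos (show i < n-1 ∧ 2*i ≠ n-2 ∧ n-2-i < (n-1)/2 from
        ⟨hi, hne, hp⟩), Bool.not_not]

end S16

theorem stmt16 (n : ℕ) (hn : 3 ≤ n) :
    Nat.card {p : Equiv.Perm (Fin n) //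
        IsCyclicPerm p ∧ Avoids p pat123 ∧ Avoids p pat132} = 2 ^ ((n - 1) / 2) := by
  classical
  set k := (n-1)/2 with hkdef
  have hk2 : 2*((n-1)/2) = n - 1 ∨ 2*((n-1)/2) = n - 2 := by omega
  let T := {p : Equiv.Perm (Fin n) // IsCyclicPerm p ∧ Avoids p pat123 ∧ Avoids p pat132}
  let F : (Fin ((n-1)/2) → Bool) → T := fun b =>
    ⟨S16.permC n (S16.cb n b) (S16.cb_Hc n hn b),
      (S16.cyclic_iff_sym n (by omega) _ _).mpr (S16.cb_sym n hn b),
      ((S16.avoids_iff _).mpr (S16.noDouble_permC n _ _)).1,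
      ((S16.avoids_iff _).mpr (S16.noDouble_permC n _ _)).2⟩
  let G : T → (Fin ((n-1)/2) → Bool) := fun P i => S16.cOf P.val i.val
  have hFG : ∀ P, F (G P) = P := by
    rintro ⟨p, hcyc, hav1, hav2⟩
    apply Subtype.ext
    have hnd : S16.NoDouble p := (S16.avoids_iff p).mp ⟨hav1, hav2⟩
    have hstruct := S16.noDouble_struct p hnd
    have hpc : p = S16.permC n (S16.cOf p) (S16.cOf_Hc p) := by
      apply Equiv.ext
      intro y
      apply Fin.ext
      rw [S16.permC_apply]
      exact hstruct y
    have hsym : S16.Sym n (S16.cOf p) :=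
      (S16.cyclic_iff_sym n (by omega) _ _).mp (hpc ▸ hcyc)
    have hcb_eq : S16.cb n (fun i => S16.cOf p i.val) = S16.cOf p := by
      funext j
      by_cases hjk : j < (n-1)/2
      · unfold S16.cb
        rw [dif_pos hjk]
      · by_cases hj1 : j < n - 1
        · by_cases hcen : 2*j = n - 2
          · unfold S16.cb
            rw [dif_neg hjk, dif_neg (by omega)]
            exact ((hsym j hj1).1 hcen).symm
          · have hp2 : n - 2 - j < (n-1)/2 := by omega
            unfold S16.cb
            rw [dif_neg hjk,
              dif_pos (show j < n-1 ∧ 2*j ≠ n-2 ∧ n-2-j < (n-1)/2 from ⟨hj1, hcen, hp2⟩)]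
            show (!(S16.cOf p (n-2-j))) = S16.cOf p j
            rw [(hsym j hj1).2 hcen, Bool.not_not]
        · unfold S16.cb
          rw [dif_neg hjk, dif_neg (by omega)]
          exact (S16.cOf_Hc p j (by omega)).symm
    apply Equiv.ext
    intro y
    apply Fin.ext
    show S16.pv n (S16.cb n (fun i => S16.cOf p i.val)) y.val = (p y : ℕ)
    rw [hcb_eq]
    exact (hstruct y).symm
  have hGF : ∀ b, G (F b) = b := by
    intro b
    funext i
    have hik : i.val < (n-1)/2 := i.isLt
    have hi1 : i.val + 1 < n := by omega
    have hcbi : S16.cb n b i.val = b i := by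
      unfold S16.cb
      rw [dif_pos hik]
    show S16.cOf (S16.permC n (S16.cb n b) (S16.cb_Hc n hn b)) i.val = b i
    unfold S16.cOf
    rw [dif_pos hi1]
    rcases hb2 : b i with _ | _ <;> rw [hb2] at hcbi
    · rw [decide_eq_false_iff_not]
      show ¬ (S16.pv n (S16.cb n b) i.val + i.val + 2 = n)
      rw [S16.pv_of_false hcbi]
      have := S16.runStart_le (S16.cb n b) i.val
      omega
    · rw [decide_eq_true_eq]
      show S16.pv n (S16.cb n b) i.val + i.val + 2 = n
      rw [S16.pv_of_true hcbi]
      omega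
  have hcard : Nat.card T = Nat.card (Fin ((n-1)/2) → Bool) :=
    Nat.card_congr ⟨G, F, hFG, hGF⟩
  show Nat.card T = 2 ^ ((n-1)/2)
  rw [hcard, Nat.card_eq_fintype_card, Fintype.card_fun, Fintype.card_bool, Fintype.card_fin]
end

section
/- Let q = q_1...q_k be an involution pattern of length k > 2 such that the position i of the maximal entry k in q satisfies i ≤ k - 2. Then for all n ≥ 2, 2·C_n(q) ≤ C_{n+1}(q), where C_n(q) denotes the number of cyclic permutations of length n avoiding q. -/
namespace Stmt19Aux

lemma contains_inv {n k : ℕ} (p : Equiv.Perm (Fin n)) (q : Equiv.Perm (Fin k))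
    (h : Contains p ⇑q) : Contains p⁻¹ ⇑q⁻¹ := by
  obtain ⟨f, hf, hiff⟩ := h
  refine ⟨fun j => p (f (q⁻¹ j)), ?_, ?_⟩
  · intro i j hij
    have := (hiff (q⁻¹ i) (q⁻¹ j)).mp
    simp only [Equiv.apply_symm_apply, Equiv.Perm.coe_inv] at this
    exact this hij
  · intro i j
    simp only [Equiv.Perm.coe_inv, Equiv.symm_apply_apply]
    exact (hf.lt_iff_lt).symm

lemma avoids_inv {n k : ℕ} (p : Equiv.Perm (Fin n)) (q : Equiv.Perm (Fin k))
    (hinv : q * q = 1) (h : Avoids p ⇑q) : Avoids p⁻¹ ⇑q := by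
  intro hc
  have hq : q⁻¹ = q := by
    rw [inv_eq_iff_mul_eq_one]; exact hinv
  have := contains_inv p⁻¹ q hc
  rw [inv_inv, hq] at this
  exact h this

lemma cyclic_inv {n : ℕ} (p : Equiv.Perm (Fin n)) (h : IsCyclicPerm p) :
    IsCyclicPerm p⁻¹ := by
  intro x y
  obtain ⟨j, hj⟩ := h y x
  exact ⟨j, by rw [← hj, inv_pow]; simp⟩

lemma no_fixed_point {m : ℕ} (p : Equiv.Perm (Fin (m+2))) (hp : IsCyclicPerm p)
    (z : Fin (m+2)) : p z ≠ z := by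
  intro h
  have hiter : ∀ j, (p ^ j) z = z := by
    intro j
    induction j with
    | zero => simp
    | succ j ih => rw [pow_succ, Equiv.Perm.mul_apply, h, ih]
  obtain ⟨y, hy⟩ := exists_ne z
  obtain ⟨j, hj⟩ := hp z y
  rw [hiter j] at hj
  exact hy hj.symm

/-- Extend a permutation of `Fin (m+1)` to `Fin (m+2)` fixing the last point. -/
def PExt {m : ℕ} (p : Equiv.Perm (Fin (m+1))) : Equiv.Perm (Fin (m+2)) where
  toFun := Fin.lastCases (Fin.last (m+1)) (fun i => (p i).castSucc)
  invFun := Fin.lastCases (Fin.last (m+1)) (fun i => (p⁻¹ i).castSucc)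
  left_inv := by
    intro x
    cases x using Fin.lastCases with
    | last => simp
    | cast i => simp
  right_inv := by
    intro x
    cases x using Fin.lastCases with
    | last => simp
    | cast i => simp

@[simp] lemma PExt_castSucc {m : ℕ} (p : Equiv.Perm (Fin (m+1))) (x : Fin (m+1)) :
    PExt p x.castSucc = (p x).castSucc := by
  simp [PExt, Equiv.coe_fn_mk]

@[simp] lemma PExt_last {m : ℕ} (p : Equiv.Perm (Fin (m+1))) :
    PExt p (Fin.last (m+1)) = Fin.last (m+1) := by
  simp [PExt, Equiv.coe_fn_mk]

lemma PExt_inv {m : ℕ} (p : Equiv.Perm (Fin (m+1))) : (PExt p)⁻¹ = PExt p⁻¹ := by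
  rw [inv_eq_iff_mul_eq_one]
  ext x : 1
  cases x using Fin.lastCases with
  | last => simp
  | cast i => simp

lemma PExt_injective {m : ℕ} : Function.Injective (PExt (m := m)) := by
  intro p p' h
  ext x : 1
  have : PExt p x.castSucc = PExt p' x.castSucc := by rw [h]
  simpa [Fin.castSucc_inj] using this

/-- The element `m` of `Fin (m+2)` (second to last). -/
def aa (m : ℕ) : Fin (m+2) := (Fin.last m).castSucc
/-- The element `m+1` of `Fin (m+2)` (last). -/
def bb (m : ℕ) : Fin (m+2) := Fin.last (m+1)

lemma aa_ne_bb (m : ℕ) : aa m ≠ bb m := by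
  simp [aa, bb, Fin.ext_iff]

/-- Insert the new maximum just before the last position. -/
def Bp {m : ℕ} (p : Equiv.Perm (Fin (m+1))) : Equiv.Perm (Fin (m+2)) :=
  PExt p * Equiv.swap (aa m) (bb m)

/-- The companion permutation: the old maximum value is bumped to the new maximum,
and the old maximum value is appended at the end. -/
def Ap {m : ℕ} (p : Equiv.Perm (Fin (m+1))) : Equiv.Perm (Fin (m+2)) :=
  Equiv.swap (aa m) (bb m) * PExt p

lemma Ap_eq_inv_Bp_inv {m : ℕ} (p : Equiv.Perm (Fin (m+1))) : Ap p = (Bp p⁻¹)⁻¹ := by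
  rw [Bp, Ap, mul_inv_rev, Equiv.swap_inv, PExt_inv, inv_inv]

@[simp] lemma Bp_aa {m : ℕ} (p : Equiv.Perm (Fin (m+1))) : Bp p (aa m) = bb m := by
  simp [Bp, Equiv.swap_apply_left, aa, bb]

@[simp] lemma Bp_bb {m : ℕ} (p : Equiv.Perm (Fin (m+1))) :
    Bp p (bb m) = (p (Fin.last m)).castSucc := by
  simp [Bp, Equiv.swap_apply_right, aa, bb]

lemma Bp_castSucc {m : ℕ} (p : Equiv.Perm (Fin (m+1))) (x : Fin (m+1)) (hx : x ≠ Fin.last m) :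
    Bp p x.castSucc = (p x).castSucc := by
  have h1 : x.castSucc ≠ aa m := by
    simp only [aa, ne_eq, Fin.castSucc_inj]; exact hx
  have h2 : x.castSucc ≠ bb m := by
    simp [bb, Fin.ext_iff]; omega
  simp [Bp, Equiv.swap_apply_of_ne_of_ne h1 h2]

lemma reach_trans {n : ℕ} (σ : Equiv.Perm (Fin n)) {x y z : Fin n}
    (h1 : ∃ j, (σ ^ j) x = y) (h2 : ∃ j, (σ ^ j) y = z) : ∃ j, (σ ^ j) x = z := by
  obtain ⟨a, ha⟩ := h1; obtain ⟨b, hb⟩ := h2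
  exact ⟨b + a, by rw [pow_add, Equiv.Perm.mul_apply, ha, hb]⟩

lemma Bp_step {m : ℕ} (p : Equiv.Perm (Fin (m+1))) (x : Fin (m+1)) :
    ∃ j, ((Bp p) ^ j) x.castSucc = (p x).castSucc := by
  by_cases hx : x = Fin.last m
  · refine ⟨2, ?_⟩
    subst hx
    have : Bp p (Fin.last m).castSucc = bb m := Bp_aa p
    rw [pow_two, Equiv.Perm.mul_apply, this, Bp_bb]
  · exact ⟨1, by rw [pow_one, Bp_castSucc p x hx]⟩

lemma Bp_iter {m : ℕ} (p : Equiv.Perm (Fin (m+1))) (t : ℕ) (x : Fin (m+1)) :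
    ∃ j, ((Bp p) ^ j) x.castSucc = ((p ^ t) x).castSucc := by
  induction t with
  | zero => exact ⟨0, by simp⟩
  | succ t ih =>
    refine reach_trans _ ih ?_
    have := Bp_step p ((p ^ t) x)
    rw [show p ((p^t) x) = (p ^ (t+1)) x by rw [pow_succ', Equiv.Perm.mul_apply]] at this
    exact this

lemma Bp_cyclic {m : ℕ} (p : Equiv.Perm (Fin (m+1))) (hp : IsCyclicPerm p) :
    IsCyclicPerm (Bp p) := by
  have key : ∀ x y : Fin (m+1), ∃ j, ((Bp p) ^ j) x.castSucc = y.castSucc := by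
    intro x y
    obtain ⟨t, ht⟩ := hp x y
    obtain ⟨j, hj⟩ := Bp_iter p t x
    exact ⟨j, by rw [hj, ht]⟩
  have to_bb : ∀ x : Fin (m+1), ∃ j, ((Bp p) ^ j) x.castSucc = bb m := by
    intro x
    refine reach_trans _ (key x (Fin.last m)) ⟨1, ?_⟩
    rw [pow_one]; exact Bp_aa p
  have from_bb : ∃ j, ((Bp p) ^ j) (bb m) = (p (Fin.last m)).castSucc :=
    ⟨1, by rw [pow_one]; exact Bp_bb p⟩
  intro u v
  cases u using Fin.lastCases with
  | last =>
    cases v using Fin.lastCases with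
    | last => exact ⟨0, by simp⟩
    | cast y => exact reach_trans _ from_bb (key _ y)
  | cast x =>
    cases v using Fin.lastCases with
    | last => exact to_bb x
    | cast y => exact key x y

lemma Bp_avoids {m k : ℕ} (hk : 2 < k) (q : Equiv.Perm (Fin k))
    (hmax : ∀ i : Fin k, (q i : ℕ) = k - 1 → (i : ℕ) + 3 ≤ k)
    (p : Equiv.Perm (Fin (m+1))) (hp : Avoids p ⇑q) : Avoids (Bp p) ⇑q := by
  rintro ⟨f, hf, hiff⟩
  by_cases ha : ∃ i₀, f i₀ = aa m
  · obtain ⟨i₀, hi₀⟩ := ha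
    have hqmax : (q i₀ : ℕ) = k - 1 := by
      by_contra hne
      set j₀ := q⁻¹ ⟨k-1, by omega⟩ with hj₀
      have hqj₀ : q j₀ = ⟨k-1, by omega⟩ := q.apply_symm_apply _
      have hj₀ne : j₀ ≠ i₀ := by
        intro h; rw [← h, hqj₀] at hne; exact hne rfl
      have hflt : Bp p (f j₀) < Bp p (f i₀) := by
        rw [hi₀, Bp_aa]
        have hne' : Bp p (f j₀) ≠ bb m := by
          intro h
          have : f j₀ = aa m := (Bp p).injective (by rw [h, Bp_aa])
          exact hj₀ne (hf.injective (this.trans hi₀.symm))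
        have h1 := (Bp p (f j₀)).isLt
        have h2 : ((Bp p) (f j₀) : ℕ) ≠ m + 1 := by
          intro h; exact hne' (Fin.ext (by simpa [bb] using h))
        rw [Fin.lt_def]
        simp only [bb, Fin.val_last]
        omega
      have hlt := (hiff j₀ i₀).mpr hflt
      rw [hqj₀] at hlt
      have h1 : (k : ℕ) - 1 < (q i₀ : ℕ) := hlt
      have h2 := (q i₀).isLt
      omega
    have h3 := hmax i₀ hqmax
    have hlt1 : f i₀ < f ⟨(i₀ : ℕ)+1, by omega⟩ := hf (by simp [Fin.lt_def])
    have hlt2 : f ⟨(i₀ : ℕ)+1, by omega⟩ < f ⟨(i₀ : ℕ)+2, by omega⟩ :=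
      hf (by simp [Fin.lt_def])
    have h4 := (f ⟨(i₀ : ℕ)+2, by omega⟩).isLt
    rw [hi₀] at hlt1
    simp only [aa, Fin.lt_def, Fin.coe_castSucc, Fin.val_last] at hlt1 hlt2
    omega
  · push_neg at ha
    have hval : ∀ i, f i ≠ bb m → (f i : ℕ) < m := by
      intro i hi
      have h1 : (f i : ℕ) ≠ m := by
        intro h; exact ha i (Fin.ext (by simpa [aa] using h))
      have h2 : (f i : ℕ) ≠ m + 1 := by
        intro h; exact hi (Fin.ext (by simpa [bb] using h))
      have := (f i).isLt
      omega
    classical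
    set g : Fin k → Fin (m+1) := fun i =>
      if h : f i = bb m then Fin.last m else ⟨(f i : ℕ), by have := hval i h; omega⟩ with hg
    apply hp
    have key : ∀ i, Bp p (f i) = (p (g i)).castSucc := by
      intro i
      by_cases h : f i = bb m
      · rw [h, Bp_bb]
        simp [hg, dif_pos h]
      · have hgi : (g i : ℕ) = (f i : ℕ) := by simp [hg, dif_neg h]
        have hfi : f i = (g i).castSucc := Fin.ext (by simp [hgi])
        have hgne : g i ≠ Fin.last m := by
          intro hh
          have := hval i h
          rw [hh] at hgi
          simp at hgi
          omega
        rw [hfi, Bp_castSucc p _ hgne]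
    refine ⟨g, ?_, ?_⟩
    · intro i j hij
      have hfij := hf hij
      by_cases hj : f j = bb m
      · have hi : f i ≠ bb m := by
          intro h; rw [h, hj] at hfij; exact lt_irrefl _ hfij
        have := hval i hi
        simp only [hg, dif_pos hj, dif_neg hi, Fin.lt_def, Fin.val_last]
        omega
      · have hi : f i ≠ bb m := by
          intro h
          rw [h] at hfij
          have h2 := hval j hj
          simp only [bb, Fin.lt_def, Fin.val_last] at hfij
          omega
        simp only [hg, dif_neg hi, dif_neg hj, Fin.lt_def] at hfij ⊢
        exact hfij
    · intro i j
      rw [hiff i j, key i, key j, Fin.castSucc_lt_castSucc_iff]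

end Stmt19Aux

open Stmt19Aux

theorem stmt19 (k : ℕ) (hk : 2 < k) (q : Equiv.Perm (Fin k))
    (hinv : q * q = 1)
    (hmax : ∀ i : Fin k, (q i : ℕ) = k - 1 → (i : ℕ) + 3 ≤ k)
    (n : ℕ) (hn : 2 ≤ n) :
    2 * Nat.card {p : Equiv.Perm (Fin n) // IsCyclicPerm p ∧ Avoids p ⇑q} ≤
      Nat.card {p : Equiv.Perm (Fin (n + 1)) // IsCyclicPerm p ∧ Avoids p ⇑q} := by
  obtain ⟨m, rfl⟩ : ∃ m, n = m + 2 := ⟨n - 2, by omega⟩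
  classical
  let S := {p : Equiv.Perm (Fin (m + 2)) // IsCyclicPerm p ∧ Avoids p ⇑q}
  let T := {p : Equiv.Perm (Fin (m + 2 + 1)) // IsCyclicPerm p ∧ Avoids p ⇑q}
  let Φ : S ⊕ S → T := Sum.elim
    (fun s => ⟨Bp (m := m + 1) s.1, Bp_cyclic s.1 s.2.1, Bp_avoids hk q hmax s.1 s.2.2⟩)
    (fun s => ⟨Ap (m := m + 1) s.1,
      by
        rw [Ap_eq_inv_Bp_inv]
        exact cyclic_inv _ (Bp_cyclic _ (cyclic_inv _ s.2.1)),
      by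
        rw [Ap_eq_inv_Bp_inv]
        exact avoids_inv _ q hinv (Bp_avoids hk q hmax _ (avoids_inv s.1 q hinv s.2.2))⟩)
  have hinj : Function.Injective Φ := by
    rintro (s | s) (s' | s') h
    · have h1 : Bp (m := m + 1) s.1 = Bp s'.1 := congrArg Subtype.val h
      have h2 : PExt (m := m + 1) s.1 = PExt s'.1 := mul_right_cancel h1
      have := PExt_injective h2
      exact congrArg Sum.inl (Subtype.ext this)
    · exfalso
      have h1 : Bp (m := m + 1) s.1 = Ap s'.1 := congrArg Subtype.val h
      have h2 : Bp (m := m + 1) s.1 (aa (m + 1)) = Ap s'.1 (aa (m + 1)) := by rw [h1]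
      rw [Bp_aa] at h2
      have hw : s'.1 (Fin.last (m + 1)) ≠ Fin.last (m + 1) :=
        no_fixed_point s'.1 s'.2.1 _
      have hA : Ap s'.1 (aa (m + 1)) = (s'.1 (Fin.last (m + 1))).castSucc := by
        have h3 : PExt s'.1 (aa (m + 1)) = (s'.1 (Fin.last (m + 1))).castSucc := by
          rw [aa, PExt_castSucc]
        have h4 : (s'.1 (Fin.last (m + 1))).castSucc ≠ aa (m + 1) := by
          rw [aa, ne_eq, Fin.castSucc_inj]; exact hw
        have h5 : (s'.1 (Fin.last (m + 1))).castSucc ≠ bb (m + 1) :=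
          (Fin.castSucc_lt_last _).ne
        rw [Ap, Equiv.Perm.mul_apply, h3, Equiv.swap_apply_of_ne_of_ne h4 h5]
      rw [hA] at h2
      exact (Fin.castSucc_lt_last _).ne (h2.symm) |>.elim
    · exfalso
      have h1 : Ap (m := m + 1) s.1 = Bp s'.1 := congrArg Subtype.val h
      have h2 : Ap (m := m + 1) s.1 (aa (m + 1)) = Bp s'.1 (aa (m + 1)) := by rw [h1]
      rw [Bp_aa] at h2
      have hw : s.1 (Fin.last (m + 1)) ≠ Fin.last (m + 1) :=
        no_fixed_point s.1 s.2.1 _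
      have hA : Ap s.1 (aa (m + 1)) = (s.1 (Fin.last (m + 1))).castSucc := by
        have h3 : PExt s.1 (aa (m + 1)) = (s.1 (Fin.last (m + 1))).castSucc := by
          rw [aa, PExt_castSucc]
        have h4 : (s.1 (Fin.last (m + 1))).castSucc ≠ aa (m + 1) := by
          rw [aa, ne_eq, Fin.castSucc_inj]; exact hw
        have h5 : (s.1 (Fin.last (m + 1))).castSucc ≠ bb (m + 1) :=
          (Fin.castSucc_lt_last _).ne
        rw [Ap, Equiv.Perm.mul_apply, h3, Equiv.swap_apply_of_ne_of_ne h4 h5]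
      rw [hA] at h2
      exact (Fin.castSucc_lt_last _).ne h2 |>.elim
    · have h1 : Ap (m := m + 1) s.1 = Ap s'.1 := congrArg Subtype.val h
      have h2 : PExt (m := m + 1) s.1 = PExt s'.1 := mul_left_cancel h1
      have := PExt_injective h2
      exact congrArg Sum.inr (Subtype.ext this)
  have hcard := Nat.card_le_card_of_injective Φ hinj
  rw [Nat.card_sum] at hcard
  have : 2 * Nat.card S = Nat.card S + Nat.card S := by ring
  exact this ▸ hcard
end
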